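/- If G is a densely ordered abelian group that is dense in its divisible hull, then G has no proper nontrivial convex subgroup definable (with parameters) in the language of ordered groups. -/

import Mathlib

open FirstOrder

/-- The language of ordered groups: a constant `0`, a binary function `+`, a binary
relation `<`. -/
def Log : FirstOrder.Language where
  Functions := fun n => match n with
    | 0 => Unit
    | 2 => Unit
    | _ => Empty
  Relations := fun n => match n with
    | 2 => Unit
    | _ => Empty

/-- The canonical `Log`-structure on an ordered abelian group. -/
instance logStructure (G : Type*) [AddCommGroup G] [LinearOrder G] [IsOrderedAddMonoid G] : Log.Structure G where
  funMap {n} f := match n, f with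
    | 0, _ => fun _ => (0 : G)
    | 2, _ => fun v => v 0 + v 1
  RelMap {n} r := match n, r with
    | 2, _ => fun v => v 0 < v 1

open FirstOrder.Language

namespace QEaux

variable {G : Type*} [AddCommGroup G] [LinearOrder G] [IsOrderedAddMonoid G]
variable {D : Type*} [AddCommGroup D] [LinearOrder D] [IsOrderedAddMonoid D]

/-- integer linear combination -/
def lin {α : Type*} [Fintype α] (k : α → ℤ) (x : α → G) : G := ∑ i, k i • x i

lemma lin_add {α : Type*} [Fintype α] (k : α → ℤ) (x z : α → G) :
    lin k (x + z) = lin k x + lin k z := by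
  simp [lin, smul_add, Finset.sum_add_distrib]

lemma lin_nsmul {α : Type*} [Fintype α] (k : α → ℤ) (N : ℕ) (z : α → G) :
    lin k (N • z) = N • lin k z := by
  simp [lin, Finset.smul_sum, smul_comm (M := ℤ) (N := ℕ)]

lemma lin_sub {α : Type*} [Fintype α] (k k' : α → ℤ) (x : α → G) :
    lin (k - k') x = lin k x - lin k' x := by
  simp [lin, sub_smul, Finset.sum_sub_distrib]

lemma lin_zsmul_left {α : Type*} [Fintype α] (c : ℤ) (k : α → ℤ) (x : α → G) :
    lin (c • k) x = c • lin k x := by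
  simp [lin, Finset.smul_sum, mul_smul]

lemma lin_add_left {α : Type*} [Fintype α] (k k' : α → ℤ) (x : α → G) :
    lin (k + k') x = lin k x + lin k' x := by
  simp [lin, add_smul, Finset.sum_add_distrib]

lemma lin_sum {α β : Type*} [Fintype α] [Fintype β] (k : α ⊕ β → ℤ) (y : α → G) (z : β → G) :
    lin k (Sum.elim y z) = lin (k ∘ Sum.inl) y + lin (k ∘ Sum.inr) z := by
  simp [lin, Fintype.sum_sum_type]

lemma lin_unit (k : Unit → ℤ) (x : Unit → G) : lin k x = k () • x () := by
  simp [lin]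

lemma lin_equiv {α β : Type*} [Fintype α] [Fintype β] (e : α ≃ β) (k : α → ℤ) (y : β → G) :
    lin k (y ∘ e) = lin (k ∘ e.symm) y := by
  simp only [lin]
  exact Fintype.sum_equiv e _ _ (by intro i; simp)

lemma lin_update {α : Type*} [Fintype α] [DecidableEq α] (k : α → ℤ) (p : α → G) (j : α) (g : G) :
    lin k (Function.update p j g) = k j • g + ∑ i ∈ Finset.univ.erase j, k i • p i := by
  have h : (fun i => k i • (Function.update p j g i)) =
      Function.update (fun i => k i • p i) j (k j • g) := by
    funext i
    by_cases hi : i = j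
    · subst hi; simp
    · simp [Function.update_of_ne hi]
  rw [lin, h, ← Finset.sum_erase_add _ _ (Finset.mem_univ j)]
  rw [Function.update_self]
  rw [Finset.sum_congr rfl (fun i hi => by
    rw [Function.update_of_ne (Finset.ne_of_mem_erase hi)])]
  exact add_comm _ _


variable (f : G →+ D)

/-- an atomic condition: `f (lin k x) < d` (if `b = true`) or `= d` (if `b = false`). -/
def acond {α : Type*} [Fintype α] (c : (α → ℤ) × D × Bool) (x : α → G) : Prop :=
  if c.2.2 then f (lin c.1 x) < c.2.1 else f (lin c.1 x) = c.2.1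

def cellSet {α : Type*} [Fintype α] (l : List ((α → ℤ) × D × Bool)) : Set (α → G) :=
  {x | ∀ c ∈ l, acond f c x}

/-- invariant ("periodic") set -/
def IsInv {α : Type*} (P : Set (α → G)) : Prop :=
  ∃ N : ℕ, 0 < N ∧ ∀ x ∈ P, ∀ z : α → G, x + N • z ∈ P

def Good {α : Type*} [Fintype α] (X : Set (α → G)) : Prop :=
  ∃ L : List ((List ((α → ℤ) × D × Bool)) × Set (α → G)),
    (∀ q ∈ L, IsInv q.2) ∧ X = {x | ∃ q ∈ L, x ∈ cellSet f q.1 ∧ x ∈ q.2}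

variable {f}
variable {α : Type*} [Fintype α]

lemma isInv_univ : IsInv (Set.univ : Set (α → G)) := ⟨1, one_pos, by simp⟩

lemma isInv_inter {P Q : Set (α → G)} (hP : IsInv P) (hQ : IsInv Q) : IsInv (P ∩ Q) := by
  obtain ⟨N, hN, hP⟩ := hP
  obtain ⟨M, hM, hQ⟩ := hQ
  refine ⟨N * M, Nat.mul_pos hN hM, ?_⟩
  rintro x ⟨hx1, hx2⟩ z
  constructor
  · have := hP x hx1 (M • z)
    rwa [← mul_smul] at this
  · have := hQ x hx2 (N • z)
    rwa [← mul_smul, mul_comm M N] at this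

lemma isInv_compl {P : Set (α → G)} (hP : IsInv P) : IsInv Pᶜ := by
  obtain ⟨N, hN, hP⟩ := hP
  refine ⟨N, hN, fun x hx z hmem => hx ?_⟩
  have := hP _ hmem (-z)
  simpa using this

lemma good_empty : Good f (∅ : Set (α → G)) := by
  refine ⟨[], by simp, by simp⟩

lemma good_union {X Y : Set (α → G)} (hX : Good f X) (hY : Good f Y) : Good f (X ∪ Y) := by
  obtain ⟨L, hL, rfl⟩ := hX
  obtain ⟨M, hM, rfl⟩ := hY
  refine ⟨L ++ M, ?_, ?_⟩
  · intro q hq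
    rcases List.mem_append.1 hq with h | h
    · exact hL q h
    · exact hM q h
  · ext x
    simp only [Set.mem_union, Set.mem_setOf_eq]
    constructor
    · rintro (⟨q, hq, h⟩ | ⟨q, hq, h⟩)
      · exact ⟨q, List.mem_append_left _ hq, h⟩
      · exact ⟨q, List.mem_append_right _ hq, h⟩
    · rintro ⟨q, hq, h⟩
      rcases List.mem_append.1 hq with h' | h'
      · exact Or.inl ⟨q, h', h⟩
      · exact Or.inr ⟨q, h', h⟩

lemma cellSet_append (l m : List ((α → ℤ) × D × Bool)) :
    cellSet f (l ++ m) = cellSet f l ∩ cellSet f m := by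
  ext x; simp [cellSet, or_imp, forall_and]

lemma good_inter {X Y : Set (α → G)} (hX : Good f X) (hY : Good f Y) : Good f (X ∩ Y) := by
  classical
  obtain ⟨L, hL, rfl⟩ := hX
  obtain ⟨M, hM, rfl⟩ := hY
  refine ⟨(L ×ˢ M).map (fun qr => (qr.1.1 ++ qr.2.1, qr.1.2 ∩ qr.2.2)), ?_, ?_⟩
  · intro q hq
    simp only [List.mem_map] at hq
    obtain ⟨⟨q1, q2⟩, hmem, rfl⟩ := hq
    obtain ⟨h1, h2⟩ := List.mem_product.1 hmem
    exact isInv_inter (hL _ h1) (hM _ h2)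
  · ext x
    simp only [Set.mem_inter_iff, Set.mem_setOf_eq, List.mem_map]
    constructor
    · rintro ⟨⟨q, hq, hx1, hx2⟩, ⟨r, hr, hy1, hy2⟩⟩
      refine ⟨_, ⟨⟨q, r⟩, List.mem_product.2 ⟨hq, hr⟩, rfl⟩, ?_, ⟨hx2, hy2⟩⟩
      rw [cellSet_append]; exact ⟨hx1, hy1⟩
    · rintro ⟨_, ⟨⟨q, r⟩, hmem, rfl⟩, hc, hP1, hP2⟩
      obtain ⟨hq, hr⟩ := List.mem_product.1 hmem
      rw [cellSet_append] at hc
      exact ⟨⟨q, hq, hc.1, hP1⟩, ⟨r, hr, hc.2, hP2⟩⟩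

lemma good_cell (l : List ((α → ℤ) × D × Bool)) : Good f (cellSet f l) := by
  refine ⟨[(l, Set.univ)], by simpa using isInv_univ, by simp⟩

lemma good_univ : Good f (Set.univ : Set (α → G)) := by
  simpa [cellSet] using good_cell (f := f) (α := α) []

lemma good_inv {P : Set (α → G)} (hP : IsInv P) : Good f P := by
  refine ⟨[([], P)], by simpa, by simp [cellSet]⟩

lemma acond_compl (c : (α → ℤ) × D × Bool) (x : α → G) :
    ¬ acond f c x ↔ (acond f (-c.1, -c.2.1, true) x ∨ acond f (c.1, c.2.1, ¬ c.2.2) x) := by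
  obtain ⟨k, d, b⟩ := c
  have hneg : f (lin (-k) x) = - f (lin k x) := by
    have : lin (α := α) (-k) x = - lin k x := by simp [lin, neg_smul, Finset.sum_neg_distrib]
    rw [this, map_neg]
  cases b <;> simp [acond, hneg, neg_lt, not_lt, le_iff_lt_or_eq, eq_comm, or_comm]

lemma good_compl {X : Set (α → G)} (hX : Good f X) : Good f Xᶜ := by
  obtain ⟨L, hL, rfl⟩ := hX
  -- Xᶜ = ⋂_{q ∈ L} (cellSet q.1 ∩ q.2)ᶜ ; prove by induction on L
  induction L with
  | nil => simpa using good_univ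
  | cons q L ih =>
    have hq : IsInv q.2 := hL q (by simp)
    have hL' : ∀ r ∈ L, IsInv r.2 := fun r hr => hL r (List.mem_cons_of_mem _ hr)
    have step : {x : α → G | ∃ r ∈ q :: L, x ∈ cellSet f r.1 ∧ x ∈ r.2}ᶜ =
        (cellSet f q.1 ∩ q.2)ᶜ ∩ {x | ∃ r ∈ L, x ∈ cellSet f r.1 ∧ x ∈ r.2}ᶜ := by
      ext x
      simp only [Set.mem_compl_iff, Set.mem_setOf_eq, Set.mem_inter_iff, List.mem_cons]
      constructor
      · intro h
        constructor
        · intro hx; exact h ⟨q, Or.inl rfl, hx.1, hx.2⟩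
        · rintro ⟨r, hr, hx⟩; exact h ⟨r, Or.inr hr, hx⟩
      · rintro ⟨h1, h2⟩ ⟨r, hr | hr, hx⟩
        · subst hr; exact h1 ⟨hx.1, hx.2⟩
        · exact h2 ⟨r, hr, hx⟩
    rw [step]
    refine good_inter ?_ (ih hL')
    -- (cellSet q.1 ∩ q.2)ᶜ = cellSet q.1ᶜ ∪ q.2ᶜ
    have : (cellSet f q.1 ∩ q.2)ᶜ = (cellSet f q.1)ᶜ ∪ q.2ᶜ := by
      rw [Set.compl_inter]
    rw [this]
    refine good_union ?_ (good_inv (isInv_compl hq))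
    -- complement of a cell is a finite union of single-atom cells
    clear step hq hL hL' ih
    induction q.1 with
    | nil => simp only [cellSet, List.not_mem_nil]; simpa using good_empty
    | cons c l ihc =>
      have : (cellSet f (c :: l))ᶜ = (cellSet f [c])ᶜ ∪ (cellSet f l)ᶜ := by
        rw [show c :: l = [c] ++ l from rfl, cellSet_append, Set.compl_inter]
      rw [this]
      refine good_union ?_ ihc
      have : (cellSet f [c])ᶜ =
          cellSet f [(-c.1, -c.2.1, true)] ∪ cellSet f [(c.1, c.2.1, ¬ c.2.2)] := by
        ext x
        simp only [Set.mem_compl_iff, cellSet, Set.mem_setOf_eq, Set.mem_union,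
          List.mem_singleton, forall_eq]
        exact acond_compl c x
      rw [this]
      exact good_union (good_cell _) (good_cell _)


noncomputable def ddiv (hdivD : ∀ (d : D) (n : ℕ), 0 < n → ∃ e : D, n • e = d)
    (d : D) (n : ℕ) : D :=
  if h : 0 < n then (hdivD d n h).choose else 0

variable (hdivD : ∀ (d : D) (n : ℕ), 0 < n → ∃ e : D, n • e = d)

lemma ddiv_spec {n : ℕ} (hn : 0 < n) (d : D) : n • ddiv hdivD d n = d := by
  rw [ddiv, dif_pos hn]; exact (hdivD d n hn).choose_spec

lemma nsmul_lt_nsmul_iff_right {A : Type*} [AddCommGroup A] [LinearOrder A] [IsOrderedAddMonoid A] {n : ℕ} (hn : 0 < n)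
    {a b : A} : n • a < n • b ↔ a < b := by
  rw [← natCast_zsmul, ← natCast_zsmul]
  exact zsmul_lt_zsmul_iff_right (by exact_mod_cast hn)

lemma lt_ddiv_iff {n : ℕ} (hn : 0 < n) {x d : D} : x < ddiv hdivD d n ↔ n • x < d := by
  conv_rhs => rw [← ddiv_spec hdivD hn d]
  exact (nsmul_lt_nsmul_iff_right hn).symm

lemma ddiv_lt_iff {n : ℕ} (hn : 0 < n) {x d : D} : ddiv hdivD d n < x ↔ d < n • x := by
  conv_rhs => rw [← ddiv_spec hdivD hn d]
  exact (nsmul_lt_nsmul_iff_right hn).symm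


lemma acond_reindex {β : Type*} [Fintype β] (e : α ≃ β) (c : (α → ℤ) × D × Bool) (y : β → G) :
    acond f c (y ∘ e) ↔ acond f (c.1 ∘ e.symm, c.2.1, c.2.2) y := by
  obtain ⟨k, d, b⟩ := c
  unfold acond
  rw [lin_equiv]

lemma good_reindex {β : Type*} [Fintype β] (e : α ≃ β) {X : Set (α → G)}
    (h : Good f X) : Good f {y : β → G | y ∘ e ∈ X} := by
  obtain ⟨L, hL, rfl⟩ := h
  refine ⟨L.map (fun q => (q.1.map (fun c => (c.1 ∘ e.symm, c.2.1, c.2.2)),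
      {y | y ∘ e ∈ q.2})), ?_, ?_⟩
  · intro q hq
    simp only [List.mem_map] at hq
    obtain ⟨r, hr, rfl⟩ := hq
    obtain ⟨N, hN, hP⟩ := hL r hr
    refine ⟨N, hN, ?_⟩
    intro y hy z
    have : (y + N • z) ∘ e = y ∘ e + N • (z ∘ e) := rfl
    simp only [Set.mem_setOf_eq, this]
    exact hP _ hy _
  · ext y
    simp only [Set.mem_setOf_eq, List.mem_map]
    constructor
    · rintro ⟨q, hq, hc, hP⟩
      refine ⟨_, ⟨q, hq, rfl⟩, ?_, hP⟩
      intro c hc'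
      simp only [List.mem_map] at hc'
      obtain ⟨c₀, hc₀, rfl⟩ := hc'
      exact (acond_reindex e c₀ y).1 (hc c₀ hc₀)
    · rintro ⟨_, ⟨q, hq, rfl⟩, hc, hP⟩
      refine ⟨q, hq, ?_, hP⟩
      intro c hc'
      exact (acond_reindex e c y).2 (hc _ (List.mem_map_of_mem hc'))

/-- one-variable versions -/
def acond1 (f : G →+ D) (c : ℤ × D × Bool) (g : G) : Prop :=
  if c.2.2 then f (c.1 • g) < c.2.1 else f (c.1 • g) = c.2.1

def cell1 (f : G →+ D) (l : List (ℤ × D × Bool)) : Set G := {g | ∀ c ∈ l, acond1 f c g}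

def IsInv1 (P : Set G) : Prop := ∃ N : ℕ, 0 < N ∧ ∀ x ∈ P, ∀ h : G, x + N • h ∈ P

def Good1 (f : G →+ D) (S : Set G) : Prop :=
  ∃ L : List ((List (ℤ × D × Bool)) × Set G),
    (∀ q ∈ L, IsInv1 q.2) ∧ S = {g | ∃ q ∈ L, g ∈ cell1 f q.1 ∧ g ∈ q.2}

lemma acond_update [DecidableEq α] (c : (α → ℤ) × D × Bool) (j : α) (p : α → G) (g : G) :
    acond f c (Function.update p j g) ↔
      acond1 f (c.1 j, c.2.1 - f (∑ i ∈ Finset.univ.erase j, c.1 i • p i), c.2.2) g := by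
  obtain ⟨k, d, b⟩ := c
  unfold acond acond1
  simp only
  rw [lin_update, map_add]
  cases b
  · simp only [Bool.false_eq_true, if_false]
    exact eq_sub_iff_add_eq.symm
  · simp only [if_true]
    exact lt_sub_iff_add_lt.symm

lemma good_update [DecidableEq α] {X : Set (α → G)} (h : Good f X) (j : α) (p : α → G) :
    Good1 f {g | Function.update p j g ∈ X} := by
  obtain ⟨L, hL, rfl⟩ := h
  refine ⟨L.map (fun q => (q.1.map (fun c =>
      (c.1 j, c.2.1 - f (∑ i ∈ Finset.univ.erase j, c.1 i • p i), c.2.2)),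
      {g | Function.update p j g ∈ q.2})), ?_, ?_⟩
  · intro q hq
    simp only [List.mem_map] at hq
    obtain ⟨r, hr, rfl⟩ := hq
    obtain ⟨N, hN, hP⟩ := hL r hr
    refine ⟨N, hN, ?_⟩
    intro x hx h
    have key : Function.update p j (x + N • h) =
        Function.update p j x + N • Pi.single j h := by
      funext i
      by_cases hi : i = j
      · subst hi; simp
      · simp [Function.update_of_ne hi, Pi.single_eq_of_ne hi]
    simp only [Set.mem_setOf_eq, key]
    exact hP _ hx _
  · ext g
    simp only [Set.mem_setOf_eq, List.mem_map]
    constructor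
    · rintro ⟨q, hq, hc, hP⟩
      refine ⟨_, ⟨q, hq, rfl⟩, ?_, hP⟩
      intro c hc'
      simp only [List.mem_map] at hc'
      obtain ⟨c₀, hc₀, rfl⟩ := hc'
      exact (acond_update c₀ j p g).1 (hc c₀ hc₀)
    · rintro ⟨_, ⟨q, hq, rfl⟩, hc, hP⟩
      refine ⟨q, hq, ?_, hP⟩
      intro c hc'
      exact (acond_update c j p g).2 (hc _ (List.mem_map_of_mem hc'))


lemma list_min {l : List D} (h : l ≠ []) : ∃ m ∈ l, ∀ e ∈ l, m ≤ e := by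
  induction l with
  | nil => exact absurd rfl h
  | cons a l ih =>
    rcases eq_or_ne l [] with rfl | hne
    · exact ⟨a, by simp⟩
    · obtain ⟨m, hm, hle⟩ := ih hne
      rcases le_total a m with hh | hh
      · exact ⟨a, List.mem_cons_self, by
          intro e he
          rcases List.mem_cons.1 he with rfl | he
          · exact le_refl _
          · exact hh.trans (hle e he)⟩
      · exact ⟨m, List.mem_cons_of_mem _ hm, by
          intro e he
          rcases List.mem_cons.1 he with rfl | he
          · exact hh
          · exact hle e he⟩

lemma list_max {l : List D} (h : l ≠ []) : ∃ m ∈ l, ∀ e ∈ l, e ≤ m := by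
  obtain ⟨m, hm, hle⟩ := list_min (l := l.map Neg.neg) (by simpa using h)
  obtain ⟨m₀, hm₀, rfl⟩ := List.mem_map.1 hm
  exact ⟨m₀, hm₀, fun e he => by
    have := hle (-e) (List.mem_map_of_mem he)
    simpa using this⟩

section Helper

variable {f : G →+ D}

include hdivD in
/-- Main density helper: a coset `g₀ + N G` meets any nonempty "interval" with
`D`-valued bounds. -/
lemma exists_coset_mem
    (hdense : ∀ a b : D, a < b → ∃ g : G, a < f g ∧ f g < b)
    (hcof : ∀ d : D, ∃ g : G, d < f g) (hcoini : ∀ d : D, ∃ g : G, f g < d)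
    {N : ℕ} (hN : 0 < N) (g₀ : G) (los his : List D)
    (hcross : ∀ v ∈ los, ∀ e ∈ his, v < e) :
    ∃ h : G, (∀ v ∈ los, v < f (g₀ + N • h)) ∧ (∀ e ∈ his, f (g₀ + N • h) < e) := by
  have key : ∀ h : G, f (g₀ + N • h) = f g₀ + N • f h := by
    intro h; rw [map_add, map_nsmul]
  rcases eq_or_ne los [] with rfl | hlos
  · rcases eq_or_ne his [] with rfl | hhis
    · exact ⟨0, by simp, by simp⟩
    · obtain ⟨e₀, he₀, hmin⟩ := list_min hhis
      obtain ⟨h, hh⟩ := hcoini (ddiv hdivD (e₀ - f g₀) N)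
      refine ⟨h, by simp, ?_⟩
      intro e he
      have h1 : N • f h < e₀ - f g₀ := (lt_ddiv_iff hdivD hN).1 hh
      have := lt_of_lt_of_le h1 (sub_le_sub_right (hmin e he) _)
      rw [key]
      exact lt_sub_iff_add_lt'.mp this
  · obtain ⟨v₀, hv₀, hmax⟩ := list_max hlos
    rcases eq_or_ne his [] with rfl | hhis
    · obtain ⟨h, hh⟩ := hcof (ddiv hdivD (v₀ - f g₀) N)
      refine ⟨h, ?_, by simp⟩
      intro v hv
      have h1 : v₀ - f g₀ < N • f h := (ddiv_lt_iff hdivD hN).1 hh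
      have := lt_of_le_of_lt (sub_le_sub_right (hmax v hv) _) h1
      rw [key]
      exact sub_lt_iff_lt_add'.mp this
    · obtain ⟨e₀, he₀, hmin⟩ := list_min hhis
      have hlt : v₀ < e₀ := hcross v₀ hv₀ e₀ he₀
      have hdd : ddiv hdivD (v₀ - f g₀) N < ddiv hdivD (e₀ - f g₀) N := by
        rw [lt_ddiv_iff hdivD hN, ddiv_spec hdivD hN]
        exact sub_lt_sub_right hlt _
      obtain ⟨h, hh1, hh2⟩ := hdense _ _ hdd
      refine ⟨h, ?_, ?_⟩
      · intro v hv
        have h1 : v₀ - f g₀ < N • f h := (ddiv_lt_iff hdivD hN).1 hh1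
        have := lt_of_le_of_lt (sub_le_sub_right (hmax v hv) _) h1
        rw [key]; exact sub_lt_iff_lt_add'.mp this
      · intro e he
        have h1 : N • f h < e₀ - f g₀ := (lt_ddiv_iff hdivD hN).1 hh2
        have := lt_of_lt_of_le h1 (sub_le_sub_right (hmin e he) _)
        rw [key]; exact lt_sub_iff_add_lt'.mp this

end Helper

section Proj

variable {f : G →+ D}
variable {β : Type*} [Fintype β] [DecidableEq β]

/-- extend a β-tuple by one more coordinate -/
def ext (y : β → G) (g : G) : β ⊕ Unit → G := Sum.elim y (fun _ => g)

lemma lin_ext (k : β ⊕ Unit → ℤ) (y : β → G) (g : G) :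
    lin k (ext y g) = lin (k ∘ Sum.inl) y + k (Sum.inr ()) • g := by
  rw [ext, lin_sum, lin_unit]
  rfl

lemma zsmul_pos_iff {a : ℤ} (ha : 0 < a) {w : D} : 0 < a • w ↔ 0 < w := by
  have := zsmul_lt_zsmul_iff_right (α := D) ha (a := 0) (b := w)
  simpa using this

lemma zsmul_zero_iff {a : ℤ} (ha : a ≠ 0) {w : D} : a • w = 0 ↔ w = 0 := by
  have := (zsmul_right_injective (G := D) ha).eq_iff (a := w) (b := 0)
  simpa using this

/-- substitution of the unique solution of an equality atom into another atom -/
lemma subst_atom (k₀ : β ⊕ Unit → ℤ) (d₀ : D) (ha₁ : 0 < k₀ (Sum.inr ()))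
    (c : (β ⊕ Unit → ℤ) × D × Bool) (y : β → G) (g : G)
    (hg : f (lin k₀ (ext y g)) = d₀) :
    acond f c (ext y g) ↔
      acond f ((k₀ (Sum.inr ())) • (c.1 ∘ Sum.inl) - (c.1 (Sum.inr ())) • (k₀ ∘ Sum.inl),
               (k₀ (Sum.inr ())) • c.2.1 - (c.1 (Sum.inr ())) • d₀, c.2.2) y := by
  obtain ⟨k, d, b⟩ := c
  set a₁ := k₀ (Sum.inr ()) with ha₁def
  set a' := k (Sum.inr ()) with ha'def
  rw [lin_ext] at hg
  have hX : f (lin k (ext y g)) = f (lin (k ∘ Sum.inl) y) + a' • f g := by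
    rw [lin_ext, map_add, map_zsmul]
  have hX' : f (lin (a₁ • (k ∘ Sum.inl) - a' • (k₀ ∘ Sum.inl)) y)
      = a₁ • f (lin (k ∘ Sum.inl) y) - a' • f (lin (k₀ ∘ Sum.inl) y) := by
    rw [lin_sub, lin_zsmul_left, lin_zsmul_left, map_sub, map_zsmul, map_zsmul]
  have hd₀ : d₀ = f (lin (k₀ ∘ Sum.inl) y) + a₁ • f g := by
    rw [← hg, map_add, map_zsmul]
  have key : (a₁ • d - a' • d₀) - f (lin (a₁ • (k ∘ Sum.inl) - a' • (k₀ ∘ Sum.inl)) y)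
      = a₁ • (d - f (lin k (ext y g))) := by
    rw [hX', hX, hd₀]
    simp only [smul_add, smul_sub, smul_smul]
    rw [mul_comm a' a₁]
    abel
  unfold acond
  simp only
  cases b
  · -- equality atom
    simp only [Bool.false_eq_true, if_false]
    rw [show (f (lin k (ext y g)) = d) ↔ (d - f (lin k (ext y g)) = 0) by
        rw [sub_eq_zero, eq_comm],
      show (f (lin (a₁ • (k ∘ Sum.inl) - a' • (k₀ ∘ Sum.inl)) y) = a₁ • d - a' • d₀) ↔
          ((a₁ • d - a' • d₀) - f (lin (a₁ • (k ∘ Sum.inl) - a' • (k₀ ∘ Sum.inl)) y) = 0) by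
        rw [sub_eq_zero, eq_comm],
      key, zsmul_zero_iff ha₁.ne']
  · -- strict inequality atom
    simp only [if_true]
    rw [show (f (lin k (ext y g)) < d) ↔ (0 < d - f (lin k (ext y g))) from sub_pos.symm,
      show (f (lin (a₁ • (k ∘ Sum.inl) - a' • (k₀ ∘ Sum.inl)) y) < a₁ • d - a' • d₀) ↔
          (0 < (a₁ • d - a' • d₀) - f (lin (a₁ • (k ∘ Sum.inl) - a' • (k₀ ∘ Sum.inl)) y)) from
        sub_pos.symm,
      key, zsmul_pos_iff ha₁]

end Proj

section ProjA

variable {f : G →+ D}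
variable {β : Type*} [Fintype β] [DecidableEq β]

lemma good_proj_piece_eq (l : List ((β ⊕ Unit → ℤ) × D × Bool)) {P : Set (β ⊕ Unit → G)}
    (hP : IsInv P) (c₀ : (β ⊕ Unit → ℤ) × D × Bool) (hc₀ : c₀ ∈ l) (heq : c₀.2.2 = false)
    (ha : c₀.1 (Sum.inr ()) ≠ 0) :
    Good f {y : β → G | ∃ g : G, ext y g ∈ cellSet f l ∧ ext y g ∈ P} := by
  classical
  obtain ⟨N, hN, hPP⟩ := hP
  -- normalize sign
  set s : ℤ := if 0 < c₀.1 (Sum.inr ()) then 1 else -1 with hs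
  set k₀ : β ⊕ Unit → ℤ := s • c₀.1 with hk₀
  set d₀ : D := s • c₀.2.1 with hd₀
  have ha₁ : 0 < k₀ (Sum.inr ()) := by
    rcases lt_or_gt_of_ne ha with h | h
    · have : s = -1 := by rw [hs, if_neg (not_lt.2 h.le)]
      rw [hk₀, this]
      simpa using h
    · have : s = 1 := by rw [hs, if_pos h]
      rw [hk₀, this]
      simpa using h
  have hequiv : ∀ x : β ⊕ Unit → G, (f (lin k₀ x) = d₀) ↔ acond f c₀ x := by
    intro x
    have hc : acond f c₀ x ↔ (f (lin c₀.1 x) = c₀.2.1) := by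
      unfold acond; rw [heq]; simp
    rw [hc, hk₀, hd₀, lin_zsmul_left, map_zsmul]
    exact (zsmul_right_injective (by rcases hs with _; rcases ite_eq_or_eq (0 < c₀.1 (Sum.inr ())) (1:ℤ) (-1) with h | h <;> rw [← hs] at h <;> rw [h] <;> norm_num : s ≠ 0)).eq_iff
  set sc : ((β ⊕ Unit → ℤ) × D × Bool) → ((β → ℤ) × D × Bool) := fun c =>
    ((k₀ (Sum.inr ())) • (c.1 ∘ Sum.inl) - (c.1 (Sum.inr ())) • (k₀ ∘ Sum.inl),
     (k₀ (Sum.inr ())) • c.2.1 - (c.1 (Sum.inr ())) • d₀, c.2.2) with hsc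
  set Q : Set (β → G) := {y | ∃ g : G, f (lin k₀ (ext y g)) = d₀ ∧ ext y g ∈ P} with hQ
  have hmain : {y : β → G | ∃ g : G, ext y g ∈ cellSet f l ∧ ext y g ∈ P}
      = cellSet f (l.map sc) ∩ Q := by
    ext y
    simp only [Set.mem_setOf_eq, Set.mem_inter_iff]
    constructor
    · rintro ⟨g, hcell, hp⟩
      have hg : f (lin k₀ (ext y g)) = d₀ := (hequiv _).2 (hcell c₀ hc₀)
      refine ⟨?_, g, hg, hp⟩
      intro c' hc'
      simp only [List.mem_map] at hc'
      obtain ⟨c, hc, rfl⟩ := hc'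
      exact (subst_atom k₀ d₀ ha₁ c y g hg).1 (hcell c hc)
    · rintro ⟨hcellL, g, hg, hp⟩
      refine ⟨g, ?_, hp⟩
      intro c hc
      exact (subst_atom k₀ d₀ ha₁ c y g hg).2 (hcellL (sc c) (List.mem_map_of_mem hc))
  rw [hmain]
  refine good_inter (good_cell _) (good_inv ?_)
  refine ⟨(k₀ (Sum.inr ())).toNat * N, Nat.mul_pos (by omega) hN, ?_⟩
  rintro y ⟨g, hg, hp⟩ z
  set A : ℕ := (k₀ (Sum.inr ())).toNat with hA
  have hAcast : (A : ℤ) = k₀ (Sum.inr ()) := Int.toNat_of_nonneg ha₁.le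
  refine ⟨g - N • lin (k₀ ∘ Sum.inl) z, ?_, ?_⟩
  · -- the equality atom still holds
    have : lin k₀ (ext (y + (A * N) • z) (g - N • lin (k₀ ∘ Sum.inl) z))
        = lin k₀ (ext y g) := by
      rw [lin_ext, lin_ext, lin_add, lin_nsmul, smul_sub]
      have h1 : k₀ (Sum.inr ()) • (N • lin (k₀ ∘ Sum.inl) z)
          = (A * N) • lin (k₀ ∘ Sum.inl) z := by
        rw [← hAcast, natCast_zsmul, ← mul_smul]
      rw [h1]
      abel
    rw [this]
    exact hg
  · -- membership in P
    have : ext (y + (A * N) • z) (g - N • lin (k₀ ∘ Sum.inl) z)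
        = ext y g + N • (ext (A • z) (- lin (k₀ ∘ Sum.inl) z)) := by
      funext i
      rcases i with i | i
      · show y i + (A * N) • z i = y i + N • (A • z i)
        rw [← mul_smul, mul_comm]
      · show g - N • lin (k₀ ∘ Sum.inl) z = g + N • (- lin (k₀ ∘ Sum.inl) z)
        rw [smul_neg]
        abel
    rw [this]
    exact hPP _ hp _

end ProjA

section ProjB

variable {f : G →+ D}
variable {β : Type*} [Fintype β] [DecidableEq β]

lemma acond_pure (c : (β ⊕ Unit → ℤ) × D × Bool) (ha : c.1 (Sum.inr ()) = 0)
    (y : β → G) (g : G) :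
    acond f c (ext y g) ↔ acond f (c.1 ∘ Sum.inl, c.2.1, c.2.2) y := by
  obtain ⟨k, d, b⟩ := c
  unfold acond
  simp only
  rw [lin_ext]
  simp only at ha
  rw [ha, zero_smul, add_zero]

include hdivD in
lemma acond_upper (c : (β ⊕ Unit → ℤ) × D × Bool) (ha : 0 < c.1 (Sum.inr ()))
    (htrue : c.2.2 = true) (y : β → G) (g : G) :
    acond f c (ext y g) ↔
      f g < ddiv hdivD (c.2.1 - f (lin (c.1 ∘ Sum.inl) y)) (c.1 (Sum.inr ())).toNat := by
  obtain ⟨k, d, b⟩ := c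
  simp only at htrue ha ⊢
  subst htrue
  unfold acond
  simp only [if_true]
  rw [lin_ext, map_add, map_zsmul]
  rw [lt_ddiv_iff hdivD (by omega)]
  have hcast : ((k (Sum.inr ())).toNat : ℤ) = k (Sum.inr ()) := Int.toNat_of_nonneg ha.le
  rw [← natCast_zsmul, hcast]
  exact lt_sub_iff_add_lt'.symm

include hdivD in
lemma acond_lower (c : (β ⊕ Unit → ℤ) × D × Bool) (ha : c.1 (Sum.inr ()) < 0)
    (htrue : c.2.2 = true) (y : β → G) (g : G) :
    acond f c (ext y g) ↔
      ddiv hdivD (f (lin (c.1 ∘ Sum.inl) y) - c.2.1) (- c.1 (Sum.inr ())).toNat < f g := by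
  obtain ⟨k, d, b⟩ := c
  simp only at htrue ha ⊢
  subst htrue
  unfold acond
  simp only [if_true]
  rw [lin_ext, map_add, map_zsmul]
  rw [ddiv_lt_iff hdivD (by omega)]
  have hcast : (((- k (Sum.inr ())).toNat : ℤ)) = - k (Sum.inr ()) :=
    Int.toNat_of_nonneg (by omega)
  rw [← natCast_zsmul, hcast, neg_smul]
  constructor
  · intro h
    rw [sub_lt_iff_lt_add]
    rw [← lt_sub_iff_add_lt] at h
    convert h using 1
    abel
  · intro h
    rw [sub_lt_iff_lt_add] at h
    rw [← lt_sub_iff_add_lt]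
    convert h using 1
    abel

include hdivD in
lemma acond_cross (cp cn : (β ⊕ Unit → ℤ) × D × Bool)
    (hap : 0 < cp.1 (Sum.inr ())) (han : cn.1 (Sum.inr ()) < 0) (y : β → G) :
    acond f (cp.1 (Sum.inr ()) • (cn.1 ∘ Sum.inl) + (- cn.1 (Sum.inr ())) • (cp.1 ∘ Sum.inl),
             (- cn.1 (Sum.inr ())) • cp.2.1 + cp.1 (Sum.inr ()) • cn.2.1, true) y ↔
      ddiv hdivD (f (lin (cn.1 ∘ Sum.inl) y) - cn.2.1) (- cn.1 (Sum.inr ())).toNat <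
      ddiv hdivD (cp.2.1 - f (lin (cp.1 ∘ Sum.inl) y)) (cp.1 (Sum.inr ())).toNat := by
  set a : ℤ := cp.1 (Sum.inr ()) with haa
  set b : ℤ := - cn.1 (Sum.inr ()) with hbb
  have hb : 0 < b := by omega
  have haT : ((a.toNat : ℤ)) = a := Int.toNat_of_nonneg hap.le
  have hbT : ((b.toNat : ℤ)) = b := Int.toNat_of_nonneg hb.le
  have haTpos : 0 < a.toNat := by omega
  have hbTpos : 0 < b.toNat := by omega
  set U := f (lin (cp.1 ∘ Sum.inl) y) with hU
  set W := f (lin (cn.1 ∘ Sum.inl) y) with hW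
  set d := cp.2.1
  set d' := cn.2.1
  -- right hand side
  have e1 : (a.toNat * b.toNat) • ddiv hdivD (W - d') b.toNat = a • (W - d') := by
    rw [mul_smul, ddiv_spec hdivD hbTpos, ← natCast_zsmul, haT]
  have e2 : (a.toNat * b.toNat) • ddiv hdivD (d - U) a.toNat = b • (d - U) := by
    rw [mul_comm, mul_smul, ddiv_spec hdivD haTpos, ← natCast_zsmul, hbT]
  have hrhs : (ddiv hdivD (W - d') b.toNat < ddiv hdivD (d - U) a.toNat) ↔
      (a • (W - d') < b • (d - U)) := by
    have hh := nsmul_lt_nsmul_iff_right (hn := Nat.mul_pos haTpos hbTpos)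
      (a := ddiv hdivD (W - d') b.toNat) (b := ddiv hdivD (d - U) a.toNat)
    rw [e1, e2] at hh
    exact hh.symm
  rw [hrhs]
  unfold acond
  simp only [if_true]
  rw [lin_add_left, lin_zsmul_left, lin_zsmul_left, map_add, map_zsmul, map_zsmul]
  rw [smul_sub, smul_sub, sub_lt_sub_iff]

end ProjB

section ProjMain

variable {f : G →+ D}
variable {β : Type*} [Fintype β] [DecidableEq β]
variable {α : Type*} [Fintype α]

lemma good_list_union {ι : Type*} (L : List ι) (A : ι → Set (α → G))
    (h : ∀ q ∈ L, Good f (A q)) : Good f {x | ∃ q ∈ L, x ∈ A q} := by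
  induction L with
  | nil => simpa using good_empty
  | cons q L ih =>
    have hset : {x | ∃ r ∈ q :: L, x ∈ A r} = A q ∪ {x | ∃ r ∈ L, x ∈ A r} := by
      ext x
      simp only [Set.mem_setOf_eq, Set.mem_union, List.mem_cons]
      constructor
      · rintro ⟨r, rfl | hr, hx⟩
        · exact Or.inl hx
        · exact Or.inr ⟨r, hr, hx⟩
      · rintro (hx | ⟨r, hr, hx⟩)
        · exact ⟨q, Or.inl rfl, hx⟩
        · exact ⟨r, Or.inr hr, hx⟩
    rw [hset]
    exact good_union (h q (by simp)) (ih fun r hr => h r (List.mem_cons_of_mem _ hr))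

include hdivD in
lemma good_proj_piece_ineq
    (hdense : ∀ a b : D, a < b → ∃ g : G, a < f g ∧ f g < b)
    (hcof : ∀ d : D, ∃ g : G, d < f g) (hcoini : ∀ d : D, ∃ g : G, f g < d)
    (l : List ((β ⊕ Unit → ℤ) × D × Bool)) {P : Set (β ⊕ Unit → G)} (hP : IsInv P)
    (hB : ∀ c ∈ l, c.2.2 = false → c.1 (Sum.inr ()) = 0) :
    Good f {y : β → G | ∃ g : G, ext y g ∈ cellSet f l ∧ ext y g ∈ P} := by
  classical
  obtain ⟨N, hN, hPP⟩ := hP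
  set l₀ := l.filter (fun c => decide (c.1 (Sum.inr ()) = 0)) with hl₀
  set lp := l.filter (fun c => decide (0 < c.1 (Sum.inr ()))) with hlp
  set ln := l.filter (fun c => decide (c.1 (Sum.inr ()) < 0)) with hln
  have hmem₀ : ∀ c, c ∈ l₀ ↔ (c ∈ l ∧ c.1 (Sum.inr ()) = 0) := fun c => by
    rw [hl₀, List.mem_filter, decide_eq_true_eq]
  have hmemp : ∀ c, c ∈ lp ↔ (c ∈ l ∧ 0 < c.1 (Sum.inr ())) := fun c => by
    rw [hlp, List.mem_filter, decide_eq_true_eq]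
  have hmemn : ∀ c, c ∈ ln ↔ (c ∈ l ∧ c.1 (Sum.inr ()) < 0) := fun c => by
    rw [hln, List.mem_filter, decide_eq_true_eq]
  have htruep : ∀ c ∈ lp, c.2.2 = true := by
    intro c hc
    obtain ⟨hcl, hpos⟩ := (hmemp c).1 hc
    cases hb : c.2.2
    · exact absurd (hB c hcl hb) (by omega)
    · rfl
  have htruen : ∀ c ∈ ln, c.2.2 = true := by
    intro c hc
    obtain ⟨hcl, hneg⟩ := (hmemn c).1 hc
    cases hb : c.2.2
    · exact absurd (hB c hcl hb) (by omega)
    · rfl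
  set EE : ((β ⊕ Unit → ℤ) × D × Bool) → (β → G) → D := fun c y =>
    ddiv hdivD (c.2.1 - f (lin (c.1 ∘ Sum.inl) y)) (c.1 (Sum.inr ())).toNat with hEE
  set VV : ((β ⊕ Unit → ℤ) × D × Bool) → (β → G) → D := fun c y =>
    ddiv hdivD (f (lin (c.1 ∘ Sum.inl) y) - c.2.1) (- c.1 (Sum.inr ())).toNat with hVV
  set crossAtoms : List ((β → ℤ) × D × Bool) := (lp ×ˢ ln).map (fun q =>
    (q.1.1 (Sum.inr ()) • (q.2.1 ∘ Sum.inl) + (- q.2.1 (Sum.inr ())) • (q.1.1 ∘ Sum.inl),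
     (- q.2.1 (Sum.inr ())) • q.1.2.1 + q.1.1 (Sum.inr ()) • q.2.2.1, true)) with hca
  have hmain : {y : β → G | ∃ g : G, ext y g ∈ cellSet f l ∧ ext y g ∈ P}
      = cellSet f (l₀.map (fun c => (c.1 ∘ Sum.inl, c.2.1, c.2.2))) ∩
        (cellSet f crossAtoms ∩ {y | ∃ g : G, ext y g ∈ P}) := by
    ext y
    simp only [Set.mem_setOf_eq, Set.mem_inter_iff]
    constructor
    · rintro ⟨g, hcell, hp⟩
      refine ⟨?_, ?_, g, hp⟩
      · intro c' hc'
        simp only [List.mem_map] at hc'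
        obtain ⟨c, hc, rfl⟩ := hc'
        obtain ⟨hcl, ha0⟩ := (hmem₀ c).1 hc
        exact (acond_pure c ha0 y g).1 (hcell c hcl)
      · intro c' hc'
        rw [hca] at hc'
        simp only [List.mem_map] at hc'
        obtain ⟨⟨cp, cn⟩, hq, rfl⟩ := hc'
        obtain ⟨hcp, hcn⟩ := List.mem_product.1 hq
        obtain ⟨hcpl, hap⟩ := (hmemp cp).1 hcp
        obtain ⟨hcnl, han⟩ := (hmemn cn).1 hcn
        refine (acond_cross hdivD cp cn hap han y).2 ?_
        have h1 := (acond_lower hdivD cn han (htruen cn hcn) y g).1 (hcell cn hcnl)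
        have h2 := (acond_upper hdivD cp hap (htruep cp hcp) y g).1 (hcell cp hcpl)
        exact lt_trans h1 h2
    · rintro ⟨hpure, hcrossC, g₀, hp₀⟩
      set los := ln.map (fun c => VV c y) with hlos
      set his := lp.map (fun c => EE c y) with hhis
      have hcr : ∀ v ∈ los, ∀ e ∈ his, v < e := by
        intro v hv e he
        rw [hlos] at hv
        rw [hhis] at he
        simp only [List.mem_map] at hv he
        obtain ⟨cn, hcn, rfl⟩ := hv
        obtain ⟨cp, hcp, rfl⟩ := he
        obtain ⟨hcpl, hap⟩ := (hmemp cp).1 hcp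
        obtain ⟨hcnl, han⟩ := (hmemn cn).1 hcn
        have hat := hcrossC _ (by
          rw [hca]
          exact List.mem_map_of_mem (List.mem_product.2 ⟨hcp, hcn⟩))
        exact (acond_cross hdivD cp cn hap han y).1 hat
      obtain ⟨h, hlo, hhi⟩ := exists_coset_mem hdivD hdense hcof hcoini hN g₀ los his hcr
      refine ⟨g₀ + N • h, ?_, ?_⟩
      · intro c hc
        rcases lt_trichotomy (c.1 (Sum.inr ())) 0 with hneg | hzero | hpos
        · refine (acond_lower hdivD c hneg (htruen c ((hmemn c).2 ⟨hc, hneg⟩)) y _).2 ?_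
          exact hlo _ (by rw [hlos]; exact List.mem_map_of_mem ((hmemn c).2 ⟨hc, hneg⟩))
        · refine (acond_pure c hzero y _).2 ?_
          exact hpure _ (List.mem_map_of_mem ((hmem₀ c).2 ⟨hc, hzero⟩))
        · refine (acond_upper hdivD c hpos (htruep c ((hmemp c).2 ⟨hc, hpos⟩)) y _).2 ?_
          exact hhi _ (by rw [hhis]; exact List.mem_map_of_mem ((hmemp c).2 ⟨hc, hpos⟩))
      · have : ext y (g₀ + N • h) = ext y g₀ + N • (ext (0 : β → G) h) := by
          funext i
          rcases i with i | i
          · show y i = y i + N • (0 : G)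
            rw [smul_zero, add_zero]
          · rfl
        rw [this]
        exact hPP _ hp₀ _
  rw [hmain]
  refine good_inter (good_cell _) (good_inter (good_cell _) (good_inv ⟨N, hN, ?_⟩))
  rintro y ⟨g, hp⟩ z
  refine ⟨g, ?_⟩
  have : ext (y + N • z) g = ext y g + N • (ext z (0 : G)) := by
    funext i
    rcases i with i | i
    · rfl
    · show g = g + N • (0 : G)
      rw [smul_zero, add_zero]
  rw [this]
  exact hPP _ hp _

include hdivD in
lemma good_proj
    (hdense : ∀ a b : D, a < b → ∃ g : G, a < f g ∧ f g < b)
    (hcof : ∀ d : D, ∃ g : G, d < f g) (hcoini : ∀ d : D, ∃ g : G, f g < d)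
    {X : Set (β ⊕ Unit → G)} (h : Good f X) :
    Good f {y : β → G | ∃ g : G, ext y g ∈ X} := by
  classical
  obtain ⟨L, hL, rfl⟩ := h
  have hset : {y : β → G | ∃ g : G, ext y g ∈ {x | ∃ q ∈ L, x ∈ cellSet f q.1 ∧ x ∈ q.2}}
      = {y | ∃ q ∈ L, y ∈ {y' : β → G | ∃ g : G, ext y' g ∈ cellSet f q.1 ∧ ext y' g ∈ q.2}} := by
    ext y
    simp only [Set.mem_setOf_eq]
    tauto
  rw [hset]
  refine good_list_union L _ (fun q hq => ?_)
  by_cases hE : ∃ c ∈ q.1, c.2.2 = false ∧ c.1 (Sum.inr ()) ≠ 0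
  · obtain ⟨c₀, hc₀, heq, ha⟩ := hE
    exact good_proj_piece_eq q.1 (hL q hq) c₀ hc₀ heq ha
  · push_neg at hE
    exact good_proj_piece_ineq hdivD hdense hcof hcoini q.1 (hL q hq) hE

end ProjMain

section Formula

variable {f : G →+ D}

lemma term_coeff {γ : Type*} [Fintype γ] [DecidableEq γ] (t : Log.Term γ) :
    ∃ k : γ → ℕ, ∀ x : γ → G, t.realize x = ∑ i, k i • x i := by
  induction t with
  | var i =>
    refine ⟨fun j => if j = i then 1 else 0, fun x => ?_⟩
    have hterm : (Language.Term.var i : Log.Term γ).realize x = x i := rfl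
    rw [hterm]
    symm
    have hsmul : ∀ j : γ, ((if j = i then 1 else 0 : ℕ)) • x j = if j = i then x j else 0 := by
      intro j; split <;> simp
    calc ∑ j, (fun j => if j = i then (1:ℕ) else 0) j • x j
        = ∑ j, if j = i then x j else 0 := Finset.sum_congr rfl (fun j _ => hsmul j)
      _ = x i := by rw [Finset.sum_ite_eq' Finset.univ i (fun j => x j)]; simp
  | func F ts ih =>
    rename_i l
    rcases l with _ | _ | _ | l
    · refine ⟨0, fun x => ?_⟩
      have : (Language.Term.func F ts).realize x = (0 : G) := rfl
      rw [this]
      simp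
    · exact (F : Empty).elim
    · obtain ⟨k₀, hk₀⟩ := ih 0
      obtain ⟨k₁, hk₁⟩ := ih 1
      refine ⟨k₀ + k₁, fun x => ?_⟩
      have : (Language.Term.func F ts).realize x = (ts 0).realize x + (ts 1).realize x := rfl
      rw [this, hk₀, hk₁]
      simp only [Pi.add_apply, add_smul]
      rw [Finset.sum_add_distrib]
    · exact (F : Empty).elim

lemma lin_natCast {γ : Type*} [Fintype γ] (k : γ → ℕ) (x : γ → G) :
    lin (fun i => (k i : ℤ)) x = ∑ i, k i • x i := by
  unfold lin
  exact Finset.sum_congr rfl (fun i _ => natCast_zsmul (x i) (k i))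

lemma good_atomic_lt {γ : Type*} [Fintype γ] [DecidableEq γ] (hf : StrictMono f)
    (t₁ t₂ : Log.Term γ) : Good f {x : γ → G | t₁.realize x < t₂.realize x} := by
  obtain ⟨k₁, hk₁⟩ := term_coeff (G := G) t₁
  obtain ⟨k₂, hk₂⟩ := term_coeff (G := G) t₂
  have : {x : γ → G | t₁.realize x < t₂.realize x}
      = cellSet f [((fun i => (k₁ i : ℤ)) - (fun i => (k₂ i : ℤ)), 0, true)] := by
    ext x
    simp only [Set.mem_setOf_eq, cellSet, List.mem_singleton, forall_eq]
    unfold acond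
    simp only [if_true]
    rw [lin_sub, map_sub, lin_natCast, lin_natCast, ← hk₁, ← hk₂, sub_neg, hf.lt_iff_lt]
  rw [this]
  exact good_cell _

lemma good_atomic_eq {γ : Type*} [Fintype γ] [DecidableEq γ] (hf : StrictMono f)
    (t₁ t₂ : Log.Term γ) : Good f {x : γ → G | t₁.realize x = t₂.realize x} := by
  obtain ⟨k₁, hk₁⟩ := term_coeff (G := G) t₁
  obtain ⟨k₂, hk₂⟩ := term_coeff (G := G) t₂
  have : {x : γ → G | t₁.realize x = t₂.realize x}
      = cellSet f [((fun i => (k₁ i : ℤ)) - (fun i => (k₂ i : ℤ)), 0, false)] := by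
    ext x
    simp only [Set.mem_setOf_eq, cellSet, List.mem_singleton, forall_eq]
    unfold acond
    simp only [Bool.false_eq_true, if_false]
    rw [lin_sub, map_sub, lin_natCast, lin_natCast, ← hk₁, ← hk₂, sub_eq_zero,
      hf.injective.eq_iff]
  rw [this]
  exact good_cell _

def finSumEquiv (κ : Type*) (n : ℕ) : (κ ⊕ Fin (n + 1)) ≃ ((κ ⊕ Fin n) ⊕ Unit) where
  toFun := Sum.elim (fun a => Sum.inl (Sum.inl a))
    (fun i => Fin.lastCases (Sum.inr ()) (fun j => Sum.inl (Sum.inr j)) i)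
  invFun := Sum.elim (Sum.elim (fun a => Sum.inl a) (fun j => Sum.inr j.castSucc))
    (fun _ => Sum.inr (Fin.last n))
  left_inv := by
    rintro (a | i)
    · rfl
    · induction i using Fin.lastCases with
      | last => simp
      | cast j => simp
  right_inv := by
    rintro ((a | j) | u)
    · rfl
    · simp
    · cases u; simp

include hdivD in
theorem good_formula {κ : Type*} [Fintype κ] [DecidableEq κ] (hf : StrictMono f)
    (hdense : ∀ a b : D, a < b → ∃ g : G, a < f g ∧ f g < b)
    (hcof : ∀ d : D, ∃ g : G, d < f g) (hcoini : ∀ d : D, ∃ g : G, f g < d) :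
    ∀ {n : ℕ} (φ : Log.BoundedFormula κ n),
      Good f {x : κ ⊕ Fin n → G | φ.Realize (x ∘ Sum.inl) (x ∘ Sum.inr)} := by
  intro n φ
  induction φ with
  | falsum =>
    rename_i m
    have : {x : κ ⊕ Fin m → G |
        (BoundedFormula.falsum : Log.BoundedFormula κ m).Realize (x ∘ Sum.inl) (x ∘ Sum.inr)}
        = ∅ := by
      ext x; simp [BoundedFormula.Realize]
    rw [this]; exact good_empty
  | equal t₁ t₂ =>
    rename_i m
    have : {x : κ ⊕ Fin m → G |
        (BoundedFormula.equal t₁ t₂).Realize (x ∘ Sum.inl) (x ∘ Sum.inr)}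
        = {x | t₁.realize x = t₂.realize x} := by
      ext x
      simp only [Set.mem_setOf_eq]
      have hx : Sum.elim (x ∘ Sum.inl) (x ∘ Sum.inr) = x := Sum.elim_comp_inl_inr x
      show (Term.realize (Sum.elim (x ∘ Sum.inl) (x ∘ Sum.inr)) t₁
          = Term.realize (Sum.elim (x ∘ Sum.inl) (x ∘ Sum.inr)) t₂) ↔ _
      rw [hx]
    rw [this]; exact good_atomic_eq hf t₁ t₂
  | rel R ts =>
    rename_i m l
    rcases l with _ | _ | _ | l
    · exact (R : Empty).elim
    · exact (R : Empty).elim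
    · have : {x : κ ⊕ Fin m → G |
          (BoundedFormula.rel R ts).Realize (x ∘ Sum.inl) (x ∘ Sum.inr)}
          = {x | (ts 0).realize x < (ts 1).realize x} := by
        ext x
        simp only [Set.mem_setOf_eq]
        have hx : Sum.elim (x ∘ Sum.inl) (x ∘ Sum.inr) = x := Sum.elim_comp_inl_inr x
        show (Term.realize (Sum.elim (x ∘ Sum.inl) (x ∘ Sum.inr)) (ts 0)
            < Term.realize (Sum.elim (x ∘ Sum.inl) (x ∘ Sum.inr)) (ts 1)) ↔ _
        rw [hx]
      rw [this]; exact good_atomic_lt hf (ts 0) (ts 1)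
    · exact (R : Empty).elim
  | imp φ ψ ihφ ihψ =>
    rename_i m
    have : {x : κ ⊕ Fin m → G | (φ.imp ψ).Realize (x ∘ Sum.inl) (x ∘ Sum.inr)}
        = {x | φ.Realize (x ∘ Sum.inl) (x ∘ Sum.inr)}ᶜ ∪
          {x | ψ.Realize (x ∘ Sum.inl) (x ∘ Sum.inr)} := by
      ext x
      simp only [Set.mem_setOf_eq, BoundedFormula.realize_imp, Set.mem_union,
        Set.mem_compl_iff, Set.mem_setOf_eq]
      exact imp_iff_not_or
    rw [this]
    exact good_union (good_compl ihφ) ihψ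
  | all φ ih =>
    rename_i m
    set e := finSumEquiv κ m with he
    have h1 : Good f {w : (κ ⊕ Fin m) ⊕ Unit → G |
        w ∘ e ∈ {x : κ ⊕ Fin (m + 1) → G | φ.Realize (x ∘ Sum.inl) (x ∘ Sum.inr)}} :=
      good_reindex e ih
    have h2 := good_compl (good_proj hdivD hdense hcof hcoini (good_compl h1))
    have hmem : ∀ (y : κ ⊕ Fin m → G) (g : G),
        (ext y g ∈ {w : (κ ⊕ Fin m) ⊕ Unit → G |
          w ∘ e ∈ {x : κ ⊕ Fin (m + 1) → G | φ.Realize (x ∘ Sum.inl) (x ∘ Sum.inr)}})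
        ↔ φ.Realize (y ∘ Sum.inl) (Fin.snoc (y ∘ Sum.inr) g) := by
      intro y g
      simp only [Set.mem_setOf_eq]
      have e1 : (ext y g ∘ e) ∘ Sum.inl = y ∘ Sum.inl := by
        funext a; rfl
      have e2 : (ext y g ∘ e) ∘ Sum.inr = Fin.snoc (y ∘ Sum.inr) g := by
        funext i
        induction i using Fin.lastCases with
        | last =>
          show (ext y g) (e (Sum.inr (Fin.last m))) = _
          have : e (Sum.inr (Fin.last m)) = Sum.inr () := by
            rw [he]; simp [finSumEquiv]
          rw [this, Fin.snoc_last]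
          rfl
        | cast j =>
          show (ext y g) (e (Sum.inr j.castSucc)) = _
          have : e (Sum.inr j.castSucc) = Sum.inl (Sum.inr j) := by
            rw [he]; simp [finSumEquiv]
          rw [this, Fin.snoc_castSucc]
          rfl
      rw [e1, e2]
    have hset : {x : κ ⊕ Fin m → G | (φ.all).Realize (x ∘ Sum.inl) (x ∘ Sum.inr)}
        = {y : κ ⊕ Fin m → G | ∃ g : G, ext y g ∈ {w : (κ ⊕ Fin m) ⊕ Unit → G |
            w ∘ e ∈ {x : κ ⊕ Fin (m + 1) → G |
              φ.Realize (x ∘ Sum.inl) (x ∘ Sum.inr)}}ᶜ}ᶜ := by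
      ext y
      simp only [Set.mem_setOf_eq, BoundedFormula.realize_all, Set.mem_compl_iff,
        not_exists, not_not]
      constructor
      · intro h g
        exact (hmem y g).2 (h g)
      · intro h g
        exact (hmem y g).1 (h g)
    rw [hset]
    exact h2

end Formula

section Endgame

variable {f : G →+ D}

include hdivD in
lemma acond1_upper {c : ℤ × D × Bool} (ha : 0 < c.1) (htrue : c.2.2 = true) (g : G) :
    acond1 f c g ↔ f g < ddiv hdivD c.2.1 c.1.toNat := by
  obtain ⟨a, d, b⟩ := c
  simp only at htrue ha ⊢
  subst htrue
  unfold acond1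
  simp only [if_true]
  rw [lt_ddiv_iff hdivD (by omega), map_zsmul, ← natCast_zsmul, Int.toNat_of_nonneg ha.le]

include hdivD in
lemma acond1_lower {c : ℤ × D × Bool} (ha : c.1 < 0) (htrue : c.2.2 = true) (g : G) :
    acond1 f c g ↔ ddiv hdivD (- c.2.1) (- c.1).toNat < f g := by
  obtain ⟨a, d, b⟩ := c
  simp only at htrue ha ⊢
  subst htrue
  unfold acond1
  simp only [if_true]
  rw [ddiv_lt_iff hdivD (by omega), map_zsmul, ← natCast_zsmul,
    Int.toNat_of_nonneg (by omega : (0:ℤ) ≤ - a), neg_smul]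
  exact neg_lt_neg_iff.symm

lemma acond1_zero {c : ℤ × D × Bool} (hz : c.1 = 0) (g g' : G) :
    acond1 f c g ↔ acond1 f c g' := by
  obtain ⟨a, d, b⟩ := c
  simp only at hz
  subst hz
  unfold acond1
  simp only [zero_smul]

lemma exists_cofinal_piece {ι : Type*} (L : List ι) (A : ι → Set G) (T : Set G)
    (hmax : ∀ s ∈ T, ∀ t ∈ T, max s t ∈ T) (hne : ∃ s, s ∈ T)
    (hcov : ∀ s ∈ T, ∃ q ∈ L, ∃ x ∈ A q, s < x ∧ 0 < x) :
    ∃ q ∈ L, ∀ s ∈ T, ∃ x ∈ A q, s < x ∧ 0 < x := by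
  induction L with
  | nil =>
    obtain ⟨s, hs⟩ := hne
    obtain ⟨q, hq, _⟩ := hcov s hs
    exact absurd hq List.not_mem_nil
  | cons q L ih =>
    by_cases hq : ∀ s ∈ T, ∃ x ∈ A q, s < x ∧ 0 < x
    · exact ⟨q, List.mem_cons_self, hq⟩
    · push_neg at hq
      obtain ⟨s₀, hs₀T, hbad⟩ := hq
      have hcov' : ∀ s ∈ T, ∃ r ∈ L, ∃ x ∈ A r, s < x ∧ 0 < x := by
        intro s hs
        obtain ⟨r, hr, x, hx, hlt, hpos⟩ := hcov (max s s₀) (hmax s hs s₀ hs₀T)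
        rcases List.mem_cons.1 hr with rfl | hrL
        · exact absurd hpos (not_lt.2 (hbad x hx (lt_of_le_of_lt (le_max_right s s₀) hlt)))
        · exact ⟨r, hrL, x, hx, lt_of_le_of_lt (le_max_left s s₀) hlt, hpos⟩
      obtain ⟨r, hr, hall⟩ := ih hcov'
      exact ⟨r, List.mem_cons_of_mem _ hr, hall⟩

include hdivD in
lemma endgame [DenselyOrdered G] (hf : StrictMono f)
    (hdense : ∀ a b : D, a < b → ∃ g : G, a < f g ∧ f g < b)
    (hcof : ∀ d : D, ∃ g : G, d < f g) (hcoini : ∀ d : D, ∃ g : G, f g < d)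
    {S : Set G} (hgood : Good1 f S)
    (h0 : (0:G) ∈ S) (hneg : ∀ a ∈ S, -a ∈ S) (hadd : ∀ a ∈ S, ∀ b ∈ S, a + b ∈ S)
    (hdcl : ∀ a b : G, b ∈ S → 0 ≤ a → a ≤ b → a ∈ S)
    (hne : S ≠ {0}) (hnu : S ≠ Set.univ) : False := by
  classical
  obtain ⟨L, hLinv, hrepr⟩ := hgood
  -- a positive element of S
  have hcex : ∃ c ∈ S, 0 < c := by
    have hnsub : ¬ S ⊆ {0} := by
      intro hsub
      exact hne (Set.Subset.antisymm hsub (by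
        intro x hx
        rcases hx with rfl
        exact h0))
    obtain ⟨s, hsS, hs0⟩ := Set.not_subset.1 hnsub
    simp only [Set.mem_singleton_iff] at hs0
    rcases lt_or_gt_of_ne hs0 with h | h
    · exact ⟨-s, hneg s hsS, neg_pos.2 h⟩
    · exact ⟨s, hsS, h⟩
  obtain ⟨c, hcS, hcpos⟩ := hcex
  -- B is nonempty
  have hBex : ∃ b, 0 < b ∧ b ∉ S := by
    have : ∃ u, u ∉ S := by
      by_contra hall
      push_neg at hall
      exact hnu (Set.eq_univ_of_forall hall)
    obtain ⟨u, hu⟩ := this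
    have hu0 : u ≠ 0 := fun h => hu (h ▸ h0)
    rcases lt_or_gt_of_ne hu0 with h | h
    · refine ⟨-u, neg_pos.2 h, fun hmem => hu ?_⟩
      have := hneg _ hmem
      rwa [neg_neg] at this
    · exact ⟨u, h, hu⟩
  -- every element of S is below every element of B
  have hSB : ∀ s ∈ S, ∀ b, (0 < b ∧ b ∉ S) → s < b := by
    intro s hs b hb
    by_contra hcon
    exact hb.2 (hdcl b s hs hb.1.le (le_of_not_gt hcon))
  -- S is upward-cofinal in itself
  have hcofS : ∀ s ∈ S, ∃ s' ∈ S, s < s' ∧ 0 < s' := by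
    intro s hs
    have hbase : max s 0 ∈ S := by
      rcases le_total s 0 with h | h
      · rwa [max_eq_right h]
      · rwa [max_eq_left h]
    refine ⟨max s 0 + c, hadd _ hbase _ hcS, ?_, ?_⟩
    · calc s ≤ max s 0 := le_max_left _ _
        _ < max s 0 + c := lt_add_of_pos_right _ hcpos
    · calc (0:G) ≤ max s 0 := le_max_right _ _
        _ < max s 0 + c := lt_add_of_pos_right _ hcpos
  -- B has no minimum
  have hBnomin : ∀ b, (0 < b ∧ b ∉ S) → ∃ b', (0 < b' ∧ b' ∉ S) ∧ b' < b := by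
    rintro b ⟨hbpos, hbns⟩
    obtain ⟨ε, hε0, hεlt⟩ := exists_between (lt_min hcpos hbpos)
    have hεc : ε < c := lt_of_lt_of_le hεlt (min_le_left _ _)
    have hεb : ε < b := lt_of_lt_of_le hεlt (min_le_right _ _)
    have hεS : ε ∈ S := hdcl ε c hcS hε0.le hεc.le
    obtain ⟨h, hlo, hhi⟩ := exists_coset_mem hdivD hdense hcof hcoini
      (by norm_num : (0:ℕ) < 2) 0
      [f (b - ε)] [f (b + ε)] (by
        intro v hv e he
        simp only [List.mem_singleton] at hv he
        subst hv; subst he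
        exact hf ((sub_lt_self b hε0).trans (lt_add_of_pos_right b hε0)))
    have h1 : f (b - ε) < f (2 • h) := by simpa using hlo _ (List.mem_singleton_self _)
    have h2 : f (2 • h) < f (b + ε) := by simpa using hhi _ (List.mem_singleton_self _)
    rw [hf.lt_iff_lt] at h1 h2
    have h2h_pos : 0 < 2 • h := lt_trans (sub_pos.2 hεb) h1
    have hhpos : 0 < h := by
      by_contra hcon
      push_neg at hcon
      have hcon2 : 2 • h ≤ 0 := by
        rw [two_smul ℕ h]
        exact add_nonpos hcon hcon
      exact absurd h2h_pos (not_lt.2 hcon2)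
    have h2hns : 2 • h ∉ S := by
      intro hmem
      have hble : b < 2 • h + ε := sub_lt_iff_lt_add.1 h1
      have hms : 2 • h + ε ∈ S := hadd _ hmem _ hεS
      exact hbns (hdcl b (2 • h + ε) hms hbpos.le hble.le)
    have hhns : h ∉ S := by
      intro hmem
      exact h2hns (by rw [two_smul ℕ h]; exact hadd _ hmem _ hmem)
    have hhb : h < b := by
      have h2b : 2 • h < 2 • b := by
        rw [two_smul ℕ b]
        exact h2.trans (add_lt_add_right hεb b)
      exact (nsmul_lt_nsmul_iff_right (by norm_num : (0:ℕ) < 2)).1 h2b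
    exact ⟨h, ⟨hhpos, hhns⟩, hhb⟩
  -- pigeonhole: find a cofinal piece
  obtain ⟨q, hqL, hco⟩ := exists_cofinal_piece L (fun q => cell1 f q.1 ∩ q.2) S
    (by
      intro s hs t ht
      rcases le_total s t with h | h
      · rwa [max_eq_right h]
      · rwa [max_eq_left h])
    ⟨0, h0⟩
    (by
      intro s hs
      obtain ⟨s', hs'S, hlt, hpos⟩ := hcofS s hs
      rw [hrepr] at hs'S
      obtain ⟨q, hq, hcell, hP⟩ := hs'S
      exact ⟨q, hq, s', ⟨hcell, hP⟩, hlt, hpos⟩)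
  have hsub : ∀ x, x ∈ cell1 f q.1 → x ∈ q.2 → x ∈ S := by
    intro x h1 h2
    rw [hrepr]
    exact ⟨q, hqL, h1, h2⟩
  obtain ⟨N, hN, hPP⟩ := hLinv q hqL
  set l := q.1 with hl
  -- case: a genuine equality atom
  by_cases hpt : ∃ c' ∈ l, c'.2.2 = false ∧ c'.1 ≠ 0
  · obtain ⟨c', hc'l, heqc, hac⟩ := hpt
    obtain ⟨x₁, ⟨hx₁c, hx₁P⟩, _, hx₁pos⟩ := hco 0 h0
    obtain ⟨x₂, ⟨hx₂c, hx₂P⟩, hx₁₂, _⟩ := hco x₁ (hsub x₁ hx₁c hx₁P)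
    have e₁ : f (c'.1 • x₁) = c'.2.1 := by
      have := hx₁c c' hc'l
      unfold acond1 at this
      rwa [heqc] at this
    have e₂ : f (c'.1 • x₂) = c'.2.1 := by
      have := hx₂c c' hc'l
      unfold acond1 at this
      rwa [heqc] at this
    have hsm : c'.1 • x₁ = c'.1 • x₂ := hf.injective (e₁.trans e₂.symm)
    have heq12 : x₁ = x₂ := zsmul_right_injective hac hsm
    rw [heq12] at hx₁₂
    exact lt_irrefl _ hx₁₂
  -- case: a false trivial atom
  by_cases hzf : ∃ c' ∈ l, c'.1 = 0 ∧ ¬ acond1 f c' 0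
  · obtain ⟨c', hc'l, hz, hbad⟩ := hzf
    obtain ⟨x₁, ⟨hx₁c, _⟩, _, _⟩ := hco 0 h0
    exact hbad ((acond1_zero hz x₁ 0).1 (hx₁c c' hc'l))
  push_neg at hpt hzf
  -- now every atom is: trivially-true (coeff 0), or strict with nonzero coeff
  set his := (l.filter (fun c' => decide (0 < c'.1))).map
    (fun c' => ddiv hdivD c'.2.1 c'.1.toNat) with hhisdef
  set los := (l.filter (fun c' => decide (c'.1 < 0))).map
    (fun c' => ddiv hdivD (- c'.2.1) (- c'.1).toNat) with hlosdef
  have htru : ∀ c' ∈ l, c'.1 ≠ 0 → c'.2.2 = true := by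
    intro c' hc' hne'
    cases hb : c'.2.2
    · exact absurd (hpt c' hc' hb) hne'
    · rfl
  have hcell_iff : ∀ g : G, g ∈ cell1 f l ↔
      ((∀ e ∈ his, f g < e) ∧ (∀ v ∈ los, v < f g)) := by
    intro g
    constructor
    · intro hg
      constructor
      · intro e he
        rw [hhisdef] at he
        simp only [List.mem_map, List.mem_filter, decide_eq_true_eq] at he
        obtain ⟨c', ⟨hc'l, hpos⟩, rfl⟩ := he
        exact (acond1_upper hdivD hpos (htru c' hc'l (by omega)) g).1 (hg c' hc'l)
      · intro v hv
        rw [hlosdef] at hv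
        simp only [List.mem_map, List.mem_filter, decide_eq_true_eq] at hv
        obtain ⟨c', ⟨hc'l, hneg'⟩, rfl⟩ := hv
        exact (acond1_lower hdivD hneg' (htru c' hc'l (by omega)) g).1 (hg c' hc'l)
    · rintro ⟨hhi, hlo⟩ c' hc'l
      rcases lt_trichotomy c'.1 0 with hn | hz | hp
      · refine (acond1_lower hdivD hn (htru c' hc'l (by omega)) g).2 ?_
        refine hlo _ ?_
        rw [hlosdef]
        simp only [List.mem_map, List.mem_filter, decide_eq_true_eq]
        exact ⟨c', ⟨hc'l, hn⟩, rfl⟩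
      · exact (acond1_zero hz 0 g).1 (hzf c' hc'l hz)
      · refine (acond1_upper hdivD hp (htru c' hc'l (by omega)) g).2 ?_
        refine hhi _ ?_
        rw [hhisdef]
        simp only [List.mem_map, List.mem_filter, decide_eq_true_eq]
        exact ⟨c', ⟨hc'l, hp⟩, rfl⟩
  -- a helper for the two "B-interval" contradictions
  have hBint : ∀ x₀, x₀ ∈ cell1 f l → x₀ ∈ q.2 → 0 < x₀ →
      ∀ b b', (0 < b ∧ b ∉ S) → (0 < b' ∧ b' ∉ S) → b' < b →
      (∀ e ∈ his, f b < e) → False := by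
    intro x₀ hx₀c hx₀P hx₀pos b b' hbB hb'B hb'b hbhi
    have hx₀S : x₀ ∈ S := hsub x₀ hx₀c hx₀P
    have hx₀b' : x₀ < b' := hSB x₀ hx₀S b' hb'B
    obtain ⟨h, hlo, hhi⟩ := exists_coset_mem hdivD hdense hcof hcoini hN x₀
      [f b'] [f b] (by
        intro v hv e he
        simp only [List.mem_singleton] at hv he
        subst hv; subst he
        exact hf hb'b)
    have h1 : f b' < f (x₀ + N • h) := hlo _ (List.mem_singleton_self _)
    have h2 : f (x₀ + N • h) < f b := hhi _ (List.mem_singleton_self _)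
    set y := x₀ + N • h with hy
    have hyP : y ∈ q.2 := hPP x₀ hx₀P h
    have hyc : y ∈ cell1 f l := by
      rw [hcell_iff]
      constructor
      · intro e he
        exact lt_trans h2 (hbhi e he)
      · intro v hv
        have hv1 : v < f x₀ := ((hcell_iff x₀).1 hx₀c).2 v hv
        have : f x₀ < f y := by
          rw [hf.lt_iff_lt]
          rw [hf.lt_iff_lt] at h1
          exact lt_trans hx₀b' h1
        exact lt_trans hv1 this
    have hyS : y ∈ S := hsub y hyc hyP
    have hyb' : y < b' := hSB y hyS b' hb'B
    rw [hf.lt_iff_lt] at h1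
    exact lt_asymm h1 hyb'
  rcases eq_or_ne his [] with hhisnil | hhisne
  · -- no upper bounds: the piece is upward closed, meets B
    obtain ⟨b, hbB⟩ := hBex
    obtain ⟨b', hb'B, hb'b⟩ := hBnomin b hbB
    obtain ⟨x₀, ⟨hx₀c, hx₀P⟩, _, hx₀pos⟩ := hco 0 h0
    exact hBint x₀ hx₀c hx₀P hx₀pos b b' hbB hb'B hb'b (by rw [hhisnil]; simp)
  · obtain ⟨u, humem, humin⟩ := list_min hhisne
    by_cases hbb : ∃ b, (0 < b ∧ b ∉ S) ∧ f b < u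
    · obtain ⟨b, hbB, hbu⟩ := hbb
      obtain ⟨b', hb'B, hb'b⟩ := hBnomin b hbB
      obtain ⟨x₀, ⟨hx₀c, hx₀P⟩, _, hx₀pos⟩ := hco 0 h0
      exact hBint x₀ hx₀c hx₀P hx₀pos b b' hbB hb'B hb'b
        (fun e he => lt_of_lt_of_le hbu (humin e he))
    · push_neg at hbb
      -- u realizes the gap in D
      have hlt : ∀ s ∈ S, f s < u := by
        intro s hs
        obtain ⟨x, ⟨hxc, hxP⟩, hsx, _⟩ := hco s hs
        have : f x < u := ((hcell_iff x).1 hxc).1 u humem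
        exact lt_trans (hf hsx) this
      have hfc : f c < u := hlt c hcS
      have hfc0 : 0 < f c := by
        have := hf hcpos
        rwa [map_zero] at this
      obtain ⟨g₁, hg₁l, hg₁u⟩ := hdense (u - f c) u (sub_lt_self u hfc0)
      obtain ⟨g₂, hg₂l, hg₂u⟩ := hdense u (u + f c) (lt_add_of_pos_right u hfc0)
      have hg₁pos : 0 < g₁ := by
        rw [← hf.lt_iff_lt, map_zero]
        exact lt_trans (sub_pos.2 hfc) hg₁l
      have hg₁S : g₁ ∈ S := by
        by_contra hcon
        exact absurd hg₁u (not_lt.2 (hbb g₁ ⟨hg₁pos, hcon⟩))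
      have hg₂ns : g₂ ∉ S := by
        intro hmem
        exact absurd (hlt g₂ hmem) (not_lt.2 hg₂l.le)
      have hg₁₂ : g₁ < g₂ := by
        rw [← hf.lt_iff_lt]
        exact lt_trans hg₁u hg₂l
      have hdpos : 0 < g₂ - g₁ := sub_pos.2 hg₁₂
      have hdlt : g₂ - g₁ < c + c := by
        rw [← hf.lt_iff_lt, map_sub, map_add]
        exact (sub_lt_sub hg₂u hg₁l).trans_eq (by abel)
      have hdS : g₂ - g₁ ∈ S := hdcl _ (c + c) (hadd c hcS c hcS) hdpos.le hdlt.le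
      have : g₂ ∈ S := by
        have := hadd g₁ hg₁S (g₂ - g₁) hdS
        rwa [add_sub_cancel] at this
      exact hg₂ns this

end Endgame

end QEaux

/-- If `G` is a densely ordered abelian group that is dense in its divisible hull `D`
(modelled by a divisible ordered abelian group with an order-embedding `f : G →+ D` whose
image meets every positive multiple class), then no set defined, with parameters, by a
formula in the language of ordered groups is a proper nontrivial convex subgroup of `G`. -/
theorem stmt_7 {G : Type*} [AddCommGroup G] [LinearOrder G] [IsOrderedAddMonoid G] [DenselyOrdered G]
    {D : Type*} [AddCommGroup D] [LinearOrder D] [IsOrderedAddMonoid D]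
    (f : G →+ D) (hf : StrictMono f)
    (hdivD : ∀ (d : D) (n : ℕ), 0 < n → ∃ e : D, n • e = d)
    (hhull : ∀ d : D, ∃ (n : ℕ) (g : G), 0 < n ∧ n • d = f g)
    (hdense : ∀ a b : D, a < b → ∃ g : G, a < f g ∧ f g < b)
    (k : ℕ) (φ : Log.Formula (Fin (k + 1))) (p : Fin k → G) :
    ∀ S : Set G, S = {x : G | φ.Realize (Fin.cons x p)} →
      ¬ ((0 : G) ∈ S ∧ (∀ a ∈ S, -a ∈ S) ∧ (∀ a ∈ S, ∀ b ∈ S, a + b ∈ S) ∧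
         (∀ a b : G, b ∈ S → 0 ≤ a → a ≤ b → a ∈ S) ∧
         S ≠ {0} ∧ S ≠ Set.univ) := by
  classical
  rintro S hSdef ⟨h0, hneg, hadd, hdcl, hne, hnu⟩
  -- a positive element of G
  have hcex : ∃ c ∈ S, 0 < c := by
    have hnsub : ¬ S ⊆ {0} := by
      intro hsub
      exact hne (Set.Subset.antisymm hsub (by
        intro x hx
        rcases hx with rfl
        exact h0))
    obtain ⟨s, hsS, hs0⟩ := Set.not_subset.1 hnsub
    simp only [Set.mem_singleton_iff] at hs0
    rcases lt_or_gt_of_ne hs0 with h | h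
    · exact ⟨-s, hneg s hsS, neg_pos.2 h⟩
    · exact ⟨s, hsS, h⟩
  obtain ⟨c, hcS, hcpos⟩ := hcex
  have hfc0 : 0 < f c := by
    have := hf hcpos
    rwa [map_zero] at this
  -- cofinality of `f '' G` in `D`
  have hcof : ∀ d : D, ∃ g : G, d < f g := by
    intro d
    rcases le_or_gt d 0 with hd | hd
    · exact ⟨c, lt_of_le_of_lt hd hfc0⟩
    · obtain ⟨n, g₀, hn, hng⟩ := hhull d
      refine ⟨g₀ + c, ?_⟩
      rw [map_add]
      have hd_le : d ≤ n • d := by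
        obtain ⟨m, rfl⟩ := Nat.exists_eq_succ_of_ne_zero hn.ne'
        rw [succ_nsmul]
        exact le_add_of_nonneg_left (nsmul_nonneg hd.le m)
      calc d ≤ n • d := hd_le
        _ = f g₀ := hng
        _ < f g₀ + f c := lt_add_of_pos_right _ hfc0
  have hcoini : ∀ d : D, ∃ g : G, f g < d := by
    intro d
    obtain ⟨g, hg⟩ := hcof (-d)
    refine ⟨-g, ?_⟩
    rw [map_neg]
    exact neg_lt.1 hg
  -- the set S is "good" in one variable
  have hGood := QEaux.good_formula hdivD hf hdense hcof hcoini (κ := Fin (k + 1)) φ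
  set p₀ : (Fin (k + 1) ⊕ Fin 0) → G := Sum.elim (Fin.cons 0 p) (fun i => i.elim0) with hp₀
  have hG1 := QEaux.good_update hGood (Sum.inl 0) p₀
  have hSet : {g : G | Function.update p₀ (Sum.inl 0) g ∈
      {x : Fin (k + 1) ⊕ Fin 0 → G |
        BoundedFormula.Realize φ (x ∘ Sum.inl) (x ∘ Sum.inr)}} = S := by
    rw [hSdef]
    ext g
    simp only [Set.mem_setOf_eq]
    have h1 : (Function.update p₀ (Sum.inl 0) g) ∘ Sum.inl = Fin.cons g p := by
      funext i
      simp only [Function.comp_apply]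
      refine Fin.cases ?_ (fun j => ?_) i
      · rw [Function.update_self, Fin.cons_zero]
      · have hne' : (Sum.inl j.succ : Fin (k + 1) ⊕ Fin 0) ≠ Sum.inl 0 := by
          simp [Fin.succ_ne_zero]
        rw [Function.update_of_ne hne', Fin.cons_succ, hp₀]
        exact Fin.cons_succ (α := fun _ => G) (0 : G) p j
    have h2 : (Function.update p₀ (Sum.inl 0) g) ∘ Sum.inr = (default : Fin 0 → G) := by
      funext i
      exact i.elim0
    show BoundedFormula.Realize φ ((Function.update p₀ (Sum.inl 0) g) ∘ Sum.inl)
        ((Function.update p₀ (Sum.inl 0) g) ∘ Sum.inr) ↔ _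
    rw [h1, h2]
    exact Iff.rfl
  rw [hSet] at hG1
  exact QEaux.endgame hdivD hf hdense hcof hcoini hG1 h0 hneg hadd hdcl hne hnu
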